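/- In any point-symmetric state space S (there exists s_0 with 2s_0 − s ∈ S for all s ∈ S), every non-trivial extreme effect e satisfies e(s_0) = 1/2, and every non-trivial extreme effect is indecomposable. -/

import Mathlib

/-- An effect on a state space `S`. -/
def IsEffect {V : Type*} [AddCommGroup V] [Module ℝ V]
    (S : Set V) (e : V →ₗ[ℝ] ℝ) : Prop :=
  ∀ s ∈ S, 0 ≤ e s ∧ e s ≤ 1

/-- The effect space of `S`. -/
def EffectSet {V : Type*} [AddCommGroup V] [Module ℝ V] (S : Set V) :
    Set (V →ₗ[ℝ] ℝ) :=
  {e | IsEffect S e}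

/-- A non-zero effect `e` is indecomposable if in any decomposition `e = e₁ + e₂`
into effects, both `e₁` and `e₂` are scalar multiples of `e`. -/
def Indecomposable {V : Type*} [AddCommGroup V] [Module ℝ V]
    (S : Set V) (e : V →ₗ[ℝ] ℝ) : Prop :=
  e ≠ 0 ∧ ∀ e₁ e₂ : V →ₗ[ℝ] ℝ, IsEffect S e₁ → IsEffect S e₂ → e = e₁ + e₂ →
    (∃ c : ℝ, e₁ = c • e) ∧ (∃ c : ℝ, e₂ = c • e)

private lemma extreme_pair {V : Type*} [AddCommGroup V] [Module ℝ V]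
    {S : Set V} {e f g : V →ₗ[ℝ] ℝ}
    (he : e ∈ Set.extremePoints ℝ (EffectSet S))
    (hf : IsEffect S f) (hg : IsEffect S g) {a b : ℝ}
    (ha : 0 < a) (hb : 0 < b) (hab : a + b = 1)
    (hcomb : a • f + b • g = e) : f = e ∧ g = e :=
  ⟨he.2 hf hg ⟨a, b, ha, hb, hab, hcomb⟩,
    he.2 hg hf ⟨b, a, hb, ha, by rw [add_comm]; exact hab, by rw [add_comm]; exact hcomb⟩⟩

/-- in a point-symmetric state space `S` (with symmetry point `s₀`),
every non-trivial extreme effect `e` satisfies `e s₀ = 1/2` and is indecomposable. -/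
theorem pointSymmetric_extreme_effects
    {V : Type*} [NormedAddCommGroup V] [NormedSpace ℝ V] [FiniteDimensional ℝ V]
    (S : Set V) (hSne : S.Nonempty) (hScvx : Convex ℝ S) (hScpt : IsCompact S)
    (u : V →ₗ[ℝ] ℝ) (hu : ∀ s ∈ S, u s = 1)
    (s₀ : V) (hs₀ : s₀ ∈ S) (hsym : ∀ s ∈ S, (2 : ℝ) • s₀ - s ∈ S) :
    ∀ e ∈ Set.extremePoints ℝ (EffectSet S), e ≠ 0 → e ≠ u →
      e s₀ = 1 / 2 ∧ Indecomposable S e := by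
  intro e he he0 heu
  have heff : IsEffect S e := he.1
  have hueff : IsEffect S u := fun s hs => by rw [hu s hs]; norm_num
  have hrefl : ∀ s ∈ S, e ((2:ℝ) • s₀ - s) = 2 * e s₀ - e s := by
    intro s hs
    rw [map_sub, map_smul, smul_eq_mul]
  have hne : (e '' S).Nonempty := hSne.image _
  have hbb : BddBelow (e '' S) := ⟨0, by rintro x ⟨s, hs, rfl⟩; exact (heff s hs).1⟩
  have hba : BddAbove (e '' S) := ⟨1, by rintro x ⟨s, hs, rfl⟩; exact (heff s hs).2⟩
  set m := sInf (e '' S) with hmdef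
  set M := sSup (e '' S) with hMdef
  have hm_le : ∀ s ∈ S, m ≤ e s := fun s hs => csInf_le hbb ⟨s, hs, rfl⟩
  have hle_M : ∀ s ∈ S, e s ≤ M := fun s hs => le_csSup hba ⟨s, hs, rfl⟩
  have hm0 : 0 ≤ m := le_csInf hne (by rintro x ⟨s, hs, rfl⟩; exact (heff s hs).1)
  have hM1 : M ≤ 1 := csSup_le hne (by rintro x ⟨s, hs, rfl⟩; exact (heff s hs).2)
  -- m = 0
  have hm : m = 0 := by
    by_contra hm'
    have hmpos : 0 < m := lt_of_le_of_ne hm0 (Ne.symm hm')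
    rcases lt_or_ge m 1 with hm1 | hm1
    · -- 0 < m < 1
      set h := (1 - m)⁻¹ • (e - m • u) with hhdef
      have hheff : IsEffect S h := by
        intro s hs
        have h2 := (heff s hs).2
        have hms := hm_le s hs
        have hhs : h s = (e s - m) / (1 - m) := by
          simp [hhdef, LinearMap.smul_apply, LinearMap.sub_apply, hu s hs, smul_eq_mul,
            inv_mul_eq_div]
        rw [hhs]
        constructor
        · exact div_nonneg (by linarith) (by linarith)
        · rw [div_le_one (by linarith)]; linarith
      have hcomb : (1 - m) • h + m • u = e := by
        rw [hhdef, smul_smul, mul_inv_cancel₀ (show (1:ℝ) - m ≠ 0 by linarith), one_smul]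
        module
      have := (extreme_pair he hheff hueff (by linarith) hmpos (by ring) hcomb).2
      exact heu this.symm
    · -- m ≥ 1 : e = 1 on S
      have hall : ∀ s ∈ S, e s = 1 := fun s hs =>
        le_antisymm (heff s hs).2 (hm1.trans (hm_le s hs))
      set g := (2:ℝ) • e - u with hgdef
      have hgeff : IsEffect S g := by
        intro s hs
        have : g s = 2 * e s - 1 := by
          simp [hgdef, LinearMap.sub_apply, LinearMap.smul_apply, hu s hs, smul_eq_mul]
        rw [this, hall s hs]; norm_num
      have hcomb : (2⁻¹:ℝ) • u + (2⁻¹:ℝ) • g = e := by rw [hgdef]; module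
      have := (extreme_pair he hueff hgeff (by norm_num) (by norm_num) (by norm_num) hcomb).1
      exact heu this.symm
  -- M = 1
  have hM : M = 1 := by
    by_contra hM'
    have hMlt : M < 1 := lt_of_le_of_ne hM1 hM'
    have h0eff : IsEffect S (0 : V →ₗ[ℝ] ℝ) := fun s hs => by norm_num
    rcases lt_or_ge 0 M with hM0 | hM0
    · -- 0 < M < 1
      set h := M⁻¹ • e with hhdef
      have hheff : IsEffect S h := by
        intro s hs
        have h1 := (heff s hs).1
        have hMs := hle_M s hs
        have hhs : h s = e s / M := by
          simp [hhdef, LinearMap.smul_apply, smul_eq_mul, inv_mul_eq_div]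
        rw [hhs]
        exact ⟨div_nonneg h1 hM0.le, by rw [div_le_one hM0]; linarith⟩
      have hcomb : M • h + (1 - M) • (0 : V →ₗ[ℝ] ℝ) = e := by
        rw [hhdef, smul_smul, mul_inv_cancel₀ (ne_of_gt hM0), one_smul]
        module
      have := (extreme_pair he hheff h0eff hM0 (by linarith) (by ring) hcomb).2
      exact he0 this.symm
    · -- M ≤ 0 : e = 0 on S
      have hall : ∀ s ∈ S, e s = 0 := fun s hs =>
        le_antisymm ((hle_M s hs).trans hM0) (heff s hs).1
      set g := (2:ℝ) • e with hgdef
      have hgeff : IsEffect S g := by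
        intro s hs
        have : g s = 2 * e s := by simp [hgdef, LinearMap.smul_apply, smul_eq_mul]
        rw [this, hall s hs]; norm_num
      have hcomb : (2⁻¹:ℝ) • (0 : V →ₗ[ℝ] ℝ) + (2⁻¹:ℝ) • g = e := by rw [hgdef]; module
      have := (extreme_pair he h0eff hgeff (by norm_num) (by norm_num) (by norm_num) hcomb).1
      exact he0 this.symm
  have hα : e s₀ = 1 / 2 := by
    have h1 : M ≤ 2 * e s₀ := csSup_le hne (by
      rintro x ⟨s, hs, rfl⟩
      have := (heff _ (hsym s hs)).1
      rw [hrefl s hs] at this; linarith)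
    have h2 : 2 * e s₀ - 1 ≤ m := le_csInf hne (by
      rintro x ⟨s, hs, rfl⟩
      have := (heff _ (hsym s hs)).2
      rw [hrefl s hs] at this; linarith)
    rw [hm] at h2; rw [hM] at h1; linarith
  refine ⟨hα, he0, ?_⟩
  have key : ∀ e₁ e₂ : V →ₗ[ℝ] ℝ, IsEffect S e₁ → IsEffect S e₂ → e = e₁ + e₂ →
      e₁ = (2 * e₁ s₀) • e := by
    intro e₁ e₂ h1 h2 heq
    set β := e₁ s₀ with hβdef
    have hβ0 : 0 ≤ β := (h1 s₀ hs₀).1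
    have hsum : ∀ s ∈ S, e s = e₁ s + e₂ s := fun s hs => by rw [heq]; rfl
    have hβh : β ≤ 1/2 := by
      have h20 := (h2 s₀ hs₀).1
      have := hsum s₀ hs₀
      rw [hα] at this; linarith
    have hrefl1 : ∀ s ∈ S, e₁ ((2:ℝ) • s₀ - s) = 2 * β - e₁ s := by
      intro s hs; rw [map_sub, map_smul, smul_eq_mul]
    have hle2β : ∀ s ∈ S, e₁ s ≤ 2 * β := by
      intro s hs
      have := (h1 _ (hsym s hs)).1
      rw [hrefl1 s hs] at this; linarith
    have hle_e : ∀ s ∈ S, e₁ s ≤ e s := by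
      intro s hs
      have := (h2 s hs).1
      have := hsum s hs; linarith
    have hge : ∀ s ∈ S, 2 * β - 1 + e s ≤ e₁ s := by
      intro s hs
      have hσ : (2:ℝ) • s₀ - s ∈ S := hsym s hs
      have := hle_e _ hσ
      rw [hrefl1 s hs, hrefl s hs, hα] at this; linarith
    set f := e₁ + (1 - 2*β) • e with hfdef
    set g := ((1:ℝ) + 2*β) • e - e₁ with hgdef
    have hfeff : IsEffect S f := by
      intro s hs
      have hfs : f s = e₁ s + (1 - 2*β) * e s := by
        simp [hfdef, LinearMap.add_apply, LinearMap.smul_apply, smul_eq_mul]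
      rw [hfs]
      have h10 := (h1 s hs).1
      have he0' := (heff s hs).1
      have he1' := (heff s hs).2
      have h2β := hle2β s hs
      have hx1 : β * e s ≤ β := mul_le_of_le_one_right hβ0 he1'
      have hx0 : 0 ≤ β * e s := mul_nonneg hβ0 he0'
      have hexp : (1 - 2*β) * e s = e s - 2*(β * e s) := by ring
      have hx2 : β * e s ≤ 1/2 * e s := mul_le_mul_of_nonneg_right hβh he0'
      have hx4 : 0 ≤ (1 - 2*β) * (1 - e s) := mul_nonneg (by linarith) (by linarith)
      have hexp4 : (1 - 2*β) * (1 - e s) = 1 - e s - 2*β + 2*(β * e s) := by ring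
      constructor
      · linarith
      · linarith
    have hgeff : IsEffect S g := by
      intro s hs
      have hgs : g s = (1 + 2*β) * e s - e₁ s := by
        simp [hgdef, LinearMap.sub_apply, LinearMap.smul_apply, smul_eq_mul]
      rw [hgs]
      have hle := hle_e s hs
      have he0' := (heff s hs).1
      have he1' := (heff s hs).2
      have hg' := hge s hs
      have hx1 : β * e s ≤ β := mul_le_of_le_one_right hβ0 (heff s hs).2
      have hx0 : 0 ≤ β * e s := mul_nonneg hβ0 he0'
      have hexp : (1 + 2*β) * e s = e s + 2*(β * e s) := by ring
      constructor
      · linarith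
      · linarith
    have hcomb : (2⁻¹:ℝ) • f + (2⁻¹:ℝ) • g = e := by rw [hfdef, hgdef]; module
    have hfe := (extreme_pair he hfeff hgeff (by norm_num) (by norm_num) (by norm_num) hcomb).1
    have hfe' : e₁ + (1 - 2*β) • e = e := by rw [← hfdef]; exact hfe
    have he₁ : e₁ = e - (1 - 2*β) • e := eq_sub_of_add_eq hfe'
    rw [he₁]; module
  intro e₁ e₂ h1 h2 heq
  exact ⟨⟨2 * e₁ s₀, key e₁ e₂ h1 h2 heq⟩,
    ⟨2 * e₂ s₀, key e₂ e₁ h2 h1 (by rw [heq, add_comm])⟩⟩
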